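/- Let A ∈ ℝ^{m×n} with m ≥ 1, ȳ > 0 componentwise with 𝟏ᵀ ȳ = 1 and Aᵀ ȳ = 0, and let Ȳ = Diag(ȳ). If ℝ^m carries the ℓ∞ norm and ℝⁿ the ℓ₂ norm, then H₀(A) ≤ 2/σ⁺min(Aᵀ Ȳ), where σ⁺min denotes the smallest positive singular value. -/

import Mathlib

/-- The Euclidean (ℓ₂) norm on `Fin k → ℝ`. -/
noncomputable def e2norm {k : ℕ} (v : Fin k → ℝ) : ℝ := Real.sqrt (∑ i, v i ^ 2)

/-- The smallest positive singular value of `M`, characterized as the infimum of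
`‖M v‖₂` over unit vectors `v` in the row space `range(Mᵀ)` of `M`. -/
noncomputable def sigmaMinPos {p q : ℕ} (M : Matrix (Fin p) (Fin q) ℝ) : ℝ :=
  sInf {r | ∃ v : Fin q → ℝ, (∃ w, M.transpose.mulVec w = v) ∧ e2norm v = 1 ∧
    r = e2norm (M.mulVec v)}

open Matrix

lemma e2norm_nonneg {k : ℕ} (v : Fin k → ℝ) : 0 ≤ e2norm v := Real.sqrt_nonneg _

lemma e2norm_sq {k : ℕ} (v : Fin k → ℝ) : e2norm v ^ 2 = ∑ i, v i ^ 2 :=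
  Real.sq_sqrt (by positivity)

lemma sq_eq_of_sq_eq {a b : ℝ} (ha : 0 ≤ a) (hb : 0 ≤ b) (h : a ^ 2 = b ^ 2) : a = b := by
  nlinarith

lemma le_of_sq_le {a b : ℝ} (ha : 0 ≤ a) (hb : 0 ≤ b) (h : a ^ 2 ≤ b ^ 2) : a ≤ b := by
  nlinarith

lemma e2norm_eq_zero {k : ℕ} {v : Fin k → ℝ} (h : e2norm v ^ 2 = 0) : v = 0 := by
  rw [e2norm_sq] at h
  funext i
  have h1 : ∀ j ∈ Finset.univ, (0:ℝ) ≤ v j ^ 2 := fun j _ => sq_nonneg _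
  have := (Finset.sum_eq_zero_iff_of_nonneg h1).mp h i (Finset.mem_univ i)
  exact pow_eq_zero_iff (by norm_num) |>.mp this

lemma quadform {m n : ℕ} (N : Matrix (Fin m) (Fin n) ℝ) (w : Fin n → ℝ) :
    e2norm (N *ᵥ w) ^ 2 = w ⬝ᵥ ((Nᵀ * N) *ᵥ w) := by
  have h1 : e2norm (N *ᵥ w) ^ 2 = (N *ᵥ w) ⬝ᵥ (N *ᵥ w) := by
    rw [e2norm, Real.sq_sqrt (by positivity)]
    simp [dotProduct, sq]
  rw [h1, dotProduct_mulVec, ← mulVec_transpose, mulVec_mulVec, dotProduct_comm]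


set_option maxHeartbeats 1000000 in
/-- If `ybar > 0`, `𝟏ᵀ ybar = 1`, `Aᵀ ybar = 0`, `Ybar = Diag(ybar)`, with `ℓ∞`
norm on `ℝᵐ` and `ℓ₂` norm on `ℝⁿ`, then `H₀(A) ≤ 2/σ⁺min(Aᵀ Ybar)`:
for every `u` with `A u ≰ 0`,
`dist₂(u, {x : A x ≤ 0}) ≤ (2/σ⁺min(Aᵀ Ybar)) ⬝ ‖(A u)⁺‖∞`. -/
theorem stmt9 {m n : ℕ} (hm : 0 < m) (A : Matrix (Fin m) (Fin n) ℝ)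
    (ybar : Fin m → ℝ) (hpos : ∀ i, 0 < ybar i) (hsum : ∑ i, ybar i = 1)
    (hker : A.transpose.mulVec ybar = 0) :
    ∀ u : Fin n → ℝ, (¬ ∀ i, A.mulVec u i ≤ 0) →
      sInf {r | ∃ x, (∀ i, A.mulVec x i ≤ 0) ∧ r = e2norm (u - x)} ≤
        (2 / sigmaMinPos (A.transpose * Matrix.diagonal ybar)) *
          ‖(fun i => max (A.mulVec u i) 0 : Fin m → ℝ)‖ := by
  intro u hu
  push_neg at hu
  obtain ⟨i0, hi0⟩ := hu
  classical
  set g : Fin m → ℝ := A.mulVec u with hg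
  set c : ℝ := ‖(fun i => max (g i) 0 : Fin m → ℝ)‖ with hc
  have hc0 : 0 ≤ c := norm_nonneg _
  have hgc : ∀ i, max (g i) 0 ≤ c := by
    intro i
    have h := norm_le_pi_norm (fun i => max (g i) 0) i
    rwa [Real.norm_eq_abs, abs_of_nonneg (le_max_right _ _)] at h
  have hdotg : ∑ i, ybar i * g i = 0 := by
    have h : (A.transpose *ᵥ ybar) ⬝ᵥ u = 0 := by rw [hker]; simp
    rw [mulVec_transpose, ← dotProduct_mulVec] at h
    simpa [dotProduct] using h
  have hybarabs : ∑ i, ybar i * |g i| ≤ 2 * c := by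
    have habs : ∀ i, ybar i * |g i| = 2 * (ybar i * max (g i) 0) - ybar i * g i := by
      intro i
      rcases le_or_gt 0 (g i) with h | h
      · rw [abs_of_nonneg h, max_eq_left h]; ring
      · rw [abs_of_neg h, max_eq_right h.le]; ring
    calc ∑ i, ybar i * |g i|
        = 2 * (∑ i, ybar i * max (g i) 0) - ∑ i, ybar i * g i := by
          rw [Finset.mul_sum, ← Finset.sum_sub_distrib]
          exact Finset.sum_congr rfl fun i _ => habs i
      _ = 2 * (∑ i, ybar i * max (g i) 0) := by rw [hdotg, sub_zero]
      _ ≤ 2 * (∑ i, ybar i * c) := by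
          have : ∑ i, ybar i * max (g i) 0 ≤ ∑ i, ybar i * c :=
            Finset.sum_le_sum fun i _ => mul_le_mul_of_nonneg_left (hgc i) (hpos i).le
          linarith
      _ = 2 * c := by rw [← Finset.sum_mul, hsum, one_mul]
  -- the matrix N = Ȳ A and T = Nᵀ N
  set N : Matrix (Fin m) (Fin n) ℝ := Matrix.diagonal ybar * A with hN
  have hNv : ∀ (w : Fin n → ℝ) (i : Fin m), (N *ᵥ w) i = ybar i * (A *ᵥ w) i := by
    intro w i
    rw [hN, ← mulVec_mulVec, mulVec_diagonal]
  have hMN : A.transpose * Matrix.diagonal ybar = Nᵀ := by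
    rw [hN, transpose_mul, diagonal_transpose]
  set T : Matrix (Fin n) (Fin n) ℝ := Nᵀ * N with hT
  have hconj : ∀ {a b : ℕ} (M : Matrix (Fin a) (Fin b) ℝ), Mᴴ = Mᵀ := by
    intro a b M; ext i j; simp [conjTranspose_apply]
  have hTh : T.IsHermitian := by
    have := isHermitian_conjTranspose_mul_self N
    rwa [hconj] at this
  set μ : Fin n → ℝ := hTh.eigenvalues with hμ
  set U : Matrix (Fin n) (Fin n) ℝ := (hTh.eigenvectorUnitary : Matrix (Fin n) (Fin n) ℝ) with hUdef
  have hstar : star U = Uᵀ := by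
    rw [Matrix.star_eq_conjTranspose, hconj]
  have hUUt : U * Uᵀ = 1 := by
    rw [← hstar]; exact (Matrix.mem_unitaryGroup_iff).mp hTh.eigenvectorUnitary.2
  have hUtU : Uᵀ * U = 1 := by
    rw [← hstar]; exact (Matrix.mem_unitaryGroup_iff').mp hTh.eigenvectorUnitary.2
  have hspec : T = U * Matrix.diagonal μ * Uᵀ := by
    have h := hTh.spectral_theorem
    rw [Unitary.conjStarAlgAut_apply] at h
    rw [← hUdef] at h
    rw [hstar] at h
    exact h
  have hUdot : ∀ p q : Fin n → ℝ, (U *ᵥ p) ⬝ᵥ (U *ᵥ q) = p ⬝ᵥ q := by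
    intro p q
    rw [dotProduct_mulVec, ← mulVec_transpose, mulVec_mulVec, hUtU, one_mulVec]
  have hUe2 : ∀ p : Fin n → ℝ, e2norm (U *ᵥ p) = e2norm p := by
    intro p
    have h : ∑ i, (U *ᵥ p) i ^ 2 = ∑ i, p i ^ 2 := by
      have := hUdot p p
      simpa [dotProduct, sq] using this
    rw [e2norm, e2norm, h]
  have hTU : ∀ a : Fin n → ℝ, T *ᵥ (U *ᵥ a) = U *ᵥ (fun i => μ i * a i) := by
    intro a
    rw [hspec, mulVec_mulVec, mul_assoc (U * Matrix.diagonal μ) Uᵀ U, hUtU, mul_one,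
      ← mulVec_mulVec]
    have hda : (Matrix.diagonal μ *ᵥ a) = fun i => μ i * a i := by
      funext i; rw [mulVec_diagonal]
    rw [hda]
  have hNU2 : ∀ a : Fin n → ℝ, e2norm (N *ᵥ (U *ᵥ a)) ^ 2 = ∑ i, μ i * a i ^ 2 := by
    intro a
    rw [quadform, ← hT, hTU, hUdot]
    simp only [dotProduct]
    exact Finset.sum_congr rfl fun i _ => by ring
  have hμ0 : ∀ i, 0 ≤ μ i := by
    intro i
    have h := hNU2 (fun j => if j = i then 1 else 0)
    have h2 : ∑ j, μ j * (if j = i then (1:ℝ) else 0) ^ 2 = μ i := by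
      rw [Finset.sum_eq_single i]
      · simp
      · intro b _ hb; simp [hb]
      · intro hb; simp at hb
    rw [h2] at h
    rw [← h]
    exact sq_nonneg _
  set z : Fin n → ℝ := Uᵀ *ᵥ u with hzdef
  have huz : U *ᵥ z = u := by rw [hzdef, mulVec_mulVec, hUUt, one_mulVec]
  set ax : Fin n → ℝ := fun i => if μ i = 0 then z i else 0 with haxdef
  set ad : Fin n → ℝ := fun i => if μ i = 0 then 0 else z i with haddef
  set x : Fin n → ℝ := U *ᵥ ax with hxdef
  set d : Fin n → ℝ := U *ᵥ ad with hddef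
  have haxad : ax + ad = z := by
    funext i
    simp only [haxdef, haddef, Pi.add_apply]
    by_cases h : μ i = 0 <;> simp [h]
  have hxd : x + d = u := by
    rw [hxdef, hddef, ← mulVec_add, haxad, huz]
  have hNx2 : e2norm (N *ᵥ x) ^ 2 = 0 := by
    rw [hxdef, hNU2]
    apply Finset.sum_eq_zero
    intro i _
    by_cases h : μ i = 0 <;> simp [haxdef, h]
  have hNx : N *ᵥ x = 0 := e2norm_eq_zero hNx2
  have hAx : ∀ i, A.mulVec x i ≤ 0 := by
    intro i
    have h : (N *ᵥ x) i = 0 := by rw [hNx]; rfl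
    rw [hNv] at h
    rcases mul_eq_zero.mp h with h' | h'
    · exact absurd h' (hpos i).ne'
    · exact le_of_eq h'
  have hNd : N *ᵥ d = N *ᵥ u := by
    conv_rhs => rw [← hxd]
    rw [mulVec_add, hNx, zero_add]
  have hNu_pos : 0 < (N *ᵥ u) i0 := by
    rw [hNv]; exact mul_pos (hpos i0) hi0
  have hP : ∃ is : Fin n, μ is ≠ 0 ∧ ∀ j, μ j ≠ 0 → μ is ≤ μ j := by
    have hPne : (Finset.univ.filter (fun i => μ i ≠ 0)).Nonempty := by
      by_contra hcon
      rw [Finset.not_nonempty_iff_eq_empty, Finset.filter_eq_empty_iff] at hcon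
      have hall : ∀ i : Fin n, μ i = 0 := fun i => not_not.mp (hcon (Finset.mem_univ i))
      have h0 : e2norm (N *ᵥ u) ^ 2 = 0 := by
        rw [← huz, hNU2]
        exact Finset.sum_eq_zero fun i _ => by rw [hall i, zero_mul]
      have h1 := e2norm_eq_zero h0
      rw [h1] at hNu_pos
      simp at hNu_pos
    obtain ⟨is, hmem, hminis⟩ := Finset.exists_min_image _ μ hPne
    rw [Finset.mem_filter] at hmem
    exact ⟨is, hmem.2, fun j hj => hminis j (Finset.mem_filter.mpr ⟨Finset.mem_univ j, hj⟩)⟩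
  obtain ⟨is, hisne, hismin⟩ := hP
  set lmin := μ is with hlmindef
  have hlpos : 0 < lmin := lt_of_le_of_ne (hμ0 is) (Ne.symm hisne)
  set s := Real.sqrt lmin with hsdef
  have hs : 0 < s := Real.sqrt_pos.mpr hlpos
  have hss : s ^ 2 = lmin := Real.sq_sqrt hlpos.le
  -- the set defining the smallest positive singular value of Nᵀ
  set SS : Set ℝ := {r | ∃ v : Fin m → ℝ, (∃ w, ((Nᵀ).transpose).mulVec w = v) ∧ e2norm v = 1 ∧
    r = e2norm ((Nᵀ).mulVec v)} with hSSdef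
  set a0 : Fin n → ℝ := fun j => if j = is then s⁻¹ else 0 with ha0def
  have ha0is : a0 is = s⁻¹ := by rw [ha0def]; simp
  have ha0ne : ∀ b, b ≠ is → a0 b = 0 := by intro b hb; rw [ha0def]; simp [hb]
  have hmemS : s ∈ SS := by
    refine ⟨N *ᵥ (U *ᵥ a0), ⟨U *ᵥ a0, by rw [transpose_transpose]⟩, ?_, ?_⟩
    · apply sq_eq_of_sq_eq (e2norm_nonneg _) zero_le_one
      rw [hNU2, one_pow]
      rw [Finset.sum_eq_single is]
      · rw [ha0is, inv_pow, hss, mul_inv_cancel₀ hlpos.ne']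
      · intro b _ hb; rw [ha0ne b hb]; ring
      · intro hb; simp at hb
    · rw [mulVec_mulVec, ← hT, hTU, hUe2]
      apply (sq_eq_of_sq_eq hs.le (e2norm_nonneg _) ?_)
      rw [e2norm_sq, hss]
      rw [Finset.sum_eq_single is]
      · rw [ha0is, mul_pow, inv_pow, hss]
        field_simp
        rw [hlmindef]
      · intro b _ hb; rw [ha0ne b hb]; ring
      · intro hb; simp at hb
  have hlbS : ∀ r ∈ SS, s ≤ r := by
    rintro r ⟨v, ⟨w, hw⟩, hv1, rfl⟩
    rw [transpose_transpose] at hw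
    subst hw
    set a : Fin n → ℝ := Uᵀ *ᵥ w with hadef
    have hwa : U *ᵥ a = w := by rw [hadef, mulVec_mulVec, hUUt, one_mulVec]
    have h1 : ∑ j, μ j * a j ^ 2 = 1 := by
      have h := hNU2 a
      rw [hwa, hv1, one_pow] at h
      exact h.symm
    have h2 : e2norm (Nᵀ *ᵥ (N *ᵥ w)) ^ 2 = ∑ j, (μ j * a j) ^ 2 := by
      rw [mulVec_mulVec, ← hT, ← hwa, hTU, hUe2, e2norm_sq]
    apply le_of_sq_le hs.le (e2norm_nonneg _)
    rw [h2, hss]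
    calc lmin = lmin * ∑ j, μ j * a j ^ 2 := by rw [h1, mul_one]
      _ = ∑ j, lmin * (μ j * a j ^ 2) := Finset.mul_sum _ _ _
      _ ≤ ∑ j, (μ j * a j) ^ 2 := by
          apply Finset.sum_le_sum
          intro j _
          by_cases h : μ j = 0
          · simp [h]
          · have h3 := hismin j h
            have h4 := hμ0 j
            nlinarith [mul_nonneg (mul_nonneg (sub_nonneg.mpr h3) h4) (sq_nonneg (a j))]
  have hsig : sigmaMinPos Nᵀ = s := by
    unfold sigmaMinPos
    rw [← hSSdef]
    apply le_antisymm
    · apply csInf_le ?_ hmemS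
      refine ⟨0, ?_⟩
      rintro r ⟨v, _, _, rfl⟩
      exact e2norm_nonneg _
    · exact le_csInf ⟨s, hmemS⟩ hlbS
  have hNu2 : e2norm (N *ᵥ u) ≤ 2 * c := by
    have h1 : ∑ i, (N *ᵥ u) i ^ 2 ≤ (∑ i, |(N *ᵥ u) i|) ^ 2 := by
      have h := Finset.sum_sq_le_sq_sum_of_nonneg
        (s := Finset.univ) (f := fun i => |(N *ᵥ u) i|) (fun i _ => abs_nonneg _)
      simpa [sq_abs] using h
    have h2 : ∑ i, |(N *ᵥ u) i| = ∑ i, ybar i * |g i| := by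
      refine Finset.sum_congr rfl fun i _ => ?_
      rw [hNv, abs_mul, abs_of_pos (hpos i)]
    have h3 : e2norm (N *ᵥ u) ≤ ∑ i, |(N *ᵥ u) i| := by
      apply le_of_sq_le (e2norm_nonneg _) (by positivity)
      rw [e2norm_sq]; exact h1
    rw [h2] at h3
    linarith
  have hd2 : lmin * e2norm d ^ 2 ≤ e2norm (N *ᵥ d) ^ 2 := by
    have hL : e2norm d = e2norm ad := by rw [hddef, hUe2]
    have hR : e2norm (N *ᵥ d) ^ 2 = ∑ i, μ i * ad i ^ 2 := by rw [hddef, hNU2]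
    rw [hL, hR, e2norm_sq, Finset.mul_sum]
    apply Finset.sum_le_sum
    intro i _
    by_cases h : μ i = 0
    · simp [haddef, h]
    · have h3 := hismin i h
      nlinarith [sq_nonneg (ad i), hμ0 i]
  have hdb : e2norm d ≤ 2 * c / s := by
    rw [le_div_iff₀ hs]
    apply le_of_sq_le (mul_nonneg (e2norm_nonneg _) hs.le) (by linarith)
    calc (e2norm d * s) ^ 2 = lmin * e2norm d ^ 2 := by rw [mul_pow, hss]; ring
      _ ≤ e2norm (N *ᵥ d) ^ 2 := hd2
      _ = e2norm (N *ᵥ u) ^ 2 := by rw [hNd]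
      _ ≤ (2 * c) ^ 2 := by nlinarith [e2norm_nonneg (N *ᵥ u)]
  rw [hMN, hsig]
  have hbdd2 : BddBelow {r | ∃ x, (∀ i, A.mulVec x i ≤ 0) ∧ r = e2norm (u - x)} := by
    refine ⟨0, ?_⟩
    rintro r ⟨x', _, rfl⟩
    exact e2norm_nonneg _
  calc sInf {r | ∃ x, (∀ i, A.mulVec x i ≤ 0) ∧ r = e2norm (u - x)}
      ≤ e2norm (u - x) := csInf_le hbdd2 ⟨x, hAx, rfl⟩
    _ = e2norm d := by rw [← hxd, add_sub_cancel_left]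
    _ ≤ 2 * c / s := hdb
    _ = (2 / s) * c := by ring
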